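/- Let n ≥ 0, let A be a nonempty finite set of points of ℤ^{n+1}, let v : A → ℝ, define trop(F)(X) = max_{m∈A}(v(m) + ⟨m, X⟩), and for X ∈ ℝ^{n+1} let A_X := {m ∈ A : v(m) + ⟨m, X⟩ = trop(F)(X)}. Assume that A_X is affinely independent for every X ∈ ℝ^{n+1}. Then for every X ∈ ℝ^{n+1} and every nonempty subset S ⊆ A_X, there exists X' ∈ ℝ^{n+1} with A_{X'} = S. -/

import Mathlib

private lemma exists_dual_aux {k : ℕ} {ι : Type*} {f : ι → (Fin k → ℝ)}
    (hf : LinearIndependent ℝ f) (g : ι → ℝ) :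
    ∃ φ : (Fin k → ℝ) →ₗ[ℝ] ℝ, ∀ i, φ (f i) = g i := by
  obtain ⟨φ, hφ⟩ := LinearMap.exists_extend ((Module.Basis.span hf).constr ℝ g)
  refine ⟨φ, fun i => ?_⟩
  have h1 : f i = (Submodule.span ℝ (Set.range f)).subtype ((Module.Basis.span hf) i) := by
    simp [Module.Basis.span_apply]
  rw [h1, ← LinearMap.comp_apply, hφ, Module.Basis.constr_basis]

private lemma exists_eps_aux {α : Type*} (K : Finset α) (c g : α → ℝ)
    (hg : ∀ m ∈ K, 0 < g m) : ∃ ε : ℝ, 0 < ε ∧ ∀ m ∈ K, ε * c m < g m := by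
  classical
  set L : Finset ℝ := insert 1 (K.image fun m => g m / (|c m| + 1)) with hL
  have hLne : L.Nonempty := ⟨1, Finset.mem_insert_self _ _⟩
  have hpos : 0 < L.min' hLne := by
    rcases Finset.mem_insert.mp (Finset.min'_mem L hLne) with h1 | h1
    · rw [h1]; norm_num
    · obtain ⟨m, hm, hme⟩ := Finset.mem_image.mp h1
      rw [← hme]
      exact div_pos (hg m hm) (by positivity)
  refine ⟨L.min' hLne, hpos, fun m hm => ?_⟩
  have hle : L.min' hLne ≤ g m / (|c m| + 1) :=
    Finset.min'_le _ _ (Finset.mem_insert_of_mem (Finset.mem_image_of_mem _ hm))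
  calc L.min' hLne * c m ≤ L.min' hLne * |c m| :=
        mul_le_mul_of_nonneg_left (le_abs_self _) hpos.le
    _ < L.min' hLne * (|c m| + 1) := by nlinarith
    _ ≤ (g m / (|c m| + 1)) * (|c m| + 1) :=
        mul_le_mul_of_nonneg_right hle (by positivity)
    _ = g m := by field_simp

/-- For a smooth tropical hypersurface (all maximizer sets affinely independent),
every nonempty subset of a maximizer set `A_X` is itself the maximizer set `A_{X'}`
at some point `X'`. -/
theorem stmt_9 (n : ℕ) (A : Finset (Fin (n + 1) → ℤ)) (hA : A.Nonempty)
    (v : (Fin (n + 1) → ℤ) → ℝ)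
    (trop : (Fin (n + 1) → ℝ) → ℝ)
    (htrop : ∀ X, trop X = A.sup' hA fun m => v m + ∑ i, (m i : ℝ) * X i)
    (AX : (Fin (n + 1) → ℝ) → Finset (Fin (n + 1) → ℤ))
    (hAX : ∀ X, AX X = A.filter fun m => v m + ∑ i, (m i : ℝ) * X i = trop X)
    (hindep : ∀ X, AffineIndependent ℝ
      (fun m : (AX X : Set (Fin (n + 1) → ℤ)) => fun i => ((m : Fin (n + 1) → ℤ) i : ℝ))) :
    ∀ X : Fin (n + 1) → ℝ, ∀ S : Finset (Fin (n + 1) → ℤ),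
      S ⊆ AX X → S.Nonempty → ∃ X' : Fin (n + 1) → ℝ, AX X' = S := by
  classical
  intro X S hS hSne
  -- notation
  set val : (Fin (n + 1) → ℝ) → (Fin (n + 1) → ℤ) → ℝ :=
    fun Y m => v m + ∑ i, (m i : ℝ) * Y i with hval
  have hAXsub : ∀ Y m, m ∈ AX Y → m ∈ A := by
    intro Y m hm; rw [hAX] at hm; exact (Finset.mem_filter.mp hm).1
  have hval_le : ∀ m ∈ A, val X m ≤ trop X := by
    intro m hm; rw [htrop]; exact Finset.le_sup' _ hm
  have hval_eq : ∀ m ∈ AX X, val X m = trop X := by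
    intro m hm; rw [hAX] at hm; exact (Finset.mem_filter.mp hm).2
  obtain ⟨m₀, hm₀S⟩ := hSne
  have hm₀AX : m₀ ∈ AX X := hS hm₀S
  -- dual functional
  set p := fun m : (AX X : Set (Fin (n + 1) → ℤ)) =>
    fun i => ((m : Fin (n + 1) → ℤ) i : ℝ) with hp
  set i₀ : (AX X : Set (Fin (n + 1) → ℤ)) := ⟨m₀, hm₀AX⟩ with hi₀
  have hli : LinearIndependent ℝ fun i : {x : (AX X : Set (Fin (n+1) → ℤ)) // x ≠ i₀} =>
      p ↑i -ᵥ p i₀ :=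
    (affineIndependent_iff_linearIndependent_vsub ℝ p i₀).mp (hindep X)
  obtain ⟨φ, hφ⟩ := exists_dual_aux hli
    (fun i => if ((i : (AX X : Set (Fin (n+1) → ℤ))) : Fin (n+1) → ℤ) ∈ S then 0 else -1)
  set t : ℝ := φ (fun i => (m₀ i : ℝ)) with ht
  have hφ' : ∀ m ∈ AX X, φ (fun i => (m i : ℝ)) = t + (if m ∈ S then 0 else -1) := by
    intro m hm
    by_cases hmm : m = m₀
    · subst hmm; simp [ht, hm₀S]
    · have hne : (⟨m, hm⟩ : (AX X : Set (Fin (n+1) → ℤ))) ≠ i₀ := by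
        simp [hi₀, hmm]
      have := hφ ⟨⟨m, hm⟩, hne⟩
      simp only [vsub_eq_sub, map_sub] at this
      have hps : p ⟨m, hm⟩ = fun i => (m i : ℝ) := rfl
      have hps0 : p i₀ = fun i => (m₀ i : ℝ) := rfl
      rw [hps, hps0] at this
      rw [← ht] at this
      linarith [this]
  -- sum-to-φ
  set c : Fin (n + 1) → ℝ := fun i => φ (fun j => if i = j then 1 else 0) with hc
  have hsum : ∀ m : Fin (n + 1) → ℤ, (∑ i, (m i : ℝ) * c i) = φ (fun i => (m i : ℝ)) := by
    intro m
    conv_rhs => rw [pi_eq_sum_univ (fun i => (m i : ℝ))]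
    rw [map_sum]
    simp [hc, smul_eq_mul]
  -- choose epsilon
  obtain ⟨ε, hε0, hε⟩ := exists_eps_aux (A \ AX X)
    (fun m => φ (fun i => (m i : ℝ)) - t) (fun m => trop X - val X m)
    (by
      intro m hm
      rcases Finset.mem_sdiff.mp hm with ⟨hmA, hmN⟩
      have h1 := hval_le m hmA
      have h2 : val X m ≠ trop X := by
        intro h; exact hmN (by rw [hAX]; exact Finset.mem_filter.mpr ⟨hmA, h⟩)
      show (0:ℝ) < trop X - val X m
      cases lt_or_eq_of_le h1 with
      | inl h => linarith
      | inr h => exact absurd h h2)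
  refine ⟨fun i => X i + ε * c i, ?_⟩
  -- value at X'
  have hval' : ∀ m : Fin (n+1) → ℤ,
      val (fun i => X i + ε * c i) m = val X m + ε * φ (fun i => (m i : ℝ)) := by
    intro m
    simp only [hval, ← hsum m, Finset.mul_sum]
    rw [add_assoc]
    congr 1
    rw [← Finset.sum_add_distrib]
    congr 1; ext i; ring
  -- values comparison
  have hS_val : ∀ m ∈ S, val (fun i => X i + ε * c i) m = trop X + ε * t := by
    intro m hm
    rw [hval' m, hval_eq m (hS hm), hφ' m (hS hm)]
    simp [hm]
  have hlt : ∀ m ∈ A, m ∉ S → val (fun i => X i + ε * c i) m < trop X + ε * t := by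
    intro m hmA hmS
    rw [hval' m]
    by_cases hmx : m ∈ AX X
    · rw [hval_eq m hmx, hφ' m hmx]
      simp only [hmS, if_false]
      nlinarith
    · have := hε m (Finset.mem_sdiff.mpr ⟨hmA, hmx⟩)
      nlinarith
  have htrop' : trop (fun i => X i + ε * c i) = trop X + ε * t := by
    rw [htrop]
    apply le_antisymm
    · apply Finset.sup'_le
      intro m hm
      by_cases hmS : m ∈ S
      · exact le_of_eq (hS_val m hmS)
      · exact (hlt m hm hmS).le
    · calc trop X + ε * t = val (fun i => X i + ε * c i) m₀ := (hS_val m₀ hm₀S).symm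
        _ ≤ _ := Finset.le_sup' _ (hAXsub X m₀ hm₀AX)
  -- conclude
  rw [hAX]
  ext m
  simp only [Finset.mem_filter]
  constructor
  · rintro ⟨hmA, hme⟩
    by_contra hmS
    have := hlt m hmA hmS
    rw [htrop'] at hme
    simp only [hval] at this
    linarith [this, hme.ge, hme.le]
  · intro hmS
    refine ⟨hAXsub X m (hS hmS), ?_⟩
    rw [htrop']
    exact hS_val m hmS
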